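/- Let 0 < α < 1 and let F be an α-strongly regular distribution with density f, and let v* = argmax_v v·(1−F(v)) be its monopoly price. Then for every x ≥ v*, 1 − F(x) ≤ ( v* / ((1−α)x + α·v*) )^{1/(1−α)}; consequently, if X is the maximum of N i.i.d. samples from F, then for every x ≥ v*, Pr[X > x] ≤ N·( v* / ((1−α)x + α·v*) )^{1/(1−α)}. -/

import Mathlib

open MeasureTheory ProbabilityTheory Filter

noncomputable section

noncomputable def sortedVal {N : ℕ} (v : Fin N → ℝ) (i : ℕ) : ℝ :=
  (Multiset.sort (↑(List.ofFn v)) (· ≤ ·)).getD (N - i) 0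

noncomputable def argmaxIdx (S : Finset ℕ) (f : ℕ → ℝ) : ℕ :=
  WithBot.unbotD 0 ((S.filter fun i => ∀ j ∈ S, f j ≤ f i).max)

noncomputable def ERMIdx (c : ℝ) {N : ℕ} (v : Fin N → ℝ) : ℕ :=
  argmaxIdx ((Finset.Icc 1 N).filter fun i => c * N < (i : ℝ))
    (fun i => (i : ℝ) * sortedVal v i)

noncomputable def ERM (c : ℝ) {N : ℕ} (v : Fin N → ℝ) : ℝ :=
  sortedVal v (ERMIdx c v)

/-- Incentive-awareness measure `δ_I(v_I, v_{-I})` of a price function `P`,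
where the coordinates in `I` are the manipulable ones and `v` records both
`v_I` (on `I`) and `v_{-I}` (off `I`). -/
noncomputable def deltaIdx {N : ℕ} (P : (Fin N → ℝ) → ℝ) (I : Finset (Fin N))
    (v : Fin N → ℝ) : ℝ :=
  1 - sInf {p : ℝ | ∃ b : Fin N → ℝ, (∀ j, 0 ≤ b j) ∧
      p = P fun j => if j ∈ I then b j else v j} / P v

/-- Worst-case incentive-awareness measure `δ_m^worst(v_{-I})`
(only the coordinates of `v` off `I` matter). -/
noncomputable def deltaWorstIdx {N : ℕ} (P : (Fin N → ℝ) → ℝ) (I : Finset (Fin N))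
    (v : Fin N → ℝ) : ℝ :=
  sSup {x : ℝ | ∃ u : Fin N → ℝ, (∀ j, 0 ≤ u j) ∧
      x = deltaIdx P I fun j => if j ∈ I then u j else v j}

/-- `Δ_{N,m}^worst` with explicit index set `I`:
expectation of `δ^worst(v_{-I})` over i.i.d. samples from `μ`. -/
noncomputable def DeltaWorstIdx {N : ℕ} (μ : Measure ℝ) (P : (Fin N → ℝ) → ℝ)
    (I : Finset (Fin N)) : ℝ :=
  ∫ v : Fin N → ℝ, deltaWorstIdx P I v ∂(Measure.pi fun _ => μ)

/-- The index set `{0, …, m-1}` inside `Fin N`. -/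
noncomputable def firstIdx (N m : ℕ) : Finset (Fin N) :=
  Finset.univ.filter fun j => (j : ℕ) < m

/-- The worst-case incentive-awareness measure `Δ_{N,m}^worst`. -/
noncomputable def DeltaWorst {N : ℕ} (μ : Measure ℝ) (P : (Fin N → ℝ) → ℝ) (m : ℕ) : ℝ :=
  DeltaWorstIdx μ P (firstIdx N m)

/-- Append-based incentive-awareness measure `δ_I(v_I, v_{-I})` for `P = ERM^c`. -/
noncomputable def deltaIA (c : ℝ) {m n : ℕ} (vI : Fin m → ℝ) (w : Fin n → ℝ) : ℝ :=
  1 - sInf {p : ℝ | ∃ b : Fin m → ℝ, (∀ i, 0 ≤ b i) ∧ p = ERM c (Fin.append b w)} /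
      ERM c (Fin.append vI w)

/-- Append-based worst-case incentive-awareness measure `δ_m^worst(v_{-I})` for `P = ERM^c`. -/
noncomputable def deltaWorstA (c : ℝ) (m : ℕ) {n : ℕ} (w : Fin n → ℝ) : ℝ :=
  sSup {x : ℝ | ∃ vI : Fin m → ℝ, (∀ i, 0 ≤ vI i) ∧ x = deltaIA c vI w}

/-- The index `k* = argmax_{i > cN} i·v_i` selected by `ERM^c` when the top `m`
of the `N` samples are fixed to `+∞` and the remaining `N - m` samples are `w`
(so `v_i` for `i > m` is the `(i-m)`-th largest entry of `w`);
ties are broken towards the larger index. -/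
noncomputable def kStarInf (c : ℝ) (N m : ℕ) {n : ℕ} (w : Fin n → ℝ) : ℕ :=
  argmaxIdx ((Finset.Icc (m + 1) N).filter fun i => c * N < (i : ℝ))
    (fun i => (i : ℝ) * sortedVal w (i - m))

/-- Interim utility `u^K(v, p)` of a bidder with value `v` in a second price
auction with reserve price `p` among `K` i.i.d. bidders from `μ`. -/
noncomputable def uK (μ : Measure ℝ) (K : ℕ) (v p : ℝ) : ℝ :=
  ∫ x : Fin (K - 1) → ℝ, max (v - (List.ofFn x).foldr max p) 0 ∂(Measure.pi fun _ => μ)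

/-- A distribution on `[0, ∞)` has monotone hazard rate (MHR) if it has a density `f`
whose hazard rate `f v / (1 - F v)` is non-decreasing on its support. -/
def IsMHR (μ : Measure ℝ) : Prop :=
  ∃ f : ℝ → ℝ, (∀ x, 0 ≤ f x) ∧ (∀ x, x < 0 → f x = 0) ∧
    μ = MeasureTheory.volume.withDensity (fun x => ENNReal.ofReal (f x)) ∧
    MonotoneOn (fun v => f v / (1 - ProbabilityTheory.cdf μ v)) (Function.support f)

/-- `α`-strong regularity: a density `f`, positive on an interval support contained
in `[0, ∞)`, whose virtual value `φ(x) = x - (1 - F x)/f x` satisfies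
`φ(y) - φ(x) ≥ α (y - x)` whenever `x < y` on the support. -/
def IsAlphaStronglyRegular (α : ℝ) (μ : Measure ℝ) : Prop :=
  ∃ f : ℝ → ℝ, (∀ x, 0 ≤ f x) ∧
    μ = MeasureTheory.volume.withDensity (fun x => ENNReal.ofReal (f x)) ∧
    Set.OrdConnected (Function.support f) ∧
    (∀ x ∈ Function.support f, 0 ≤ x) ∧
    (∀ x ∈ Function.support f, ∀ y ∈ Function.support f, x < y →
      α * (y - x) ≤
        (y - (1 - ProbabilityTheory.cdf μ y) / f y) -
          (x - (1 - ProbabilityTheory.cdf μ x) / f x))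

end

section AuxTailBound
open MeasureTheory ProbabilityTheory Filter Set
open scoped Topology ENNReal

lemma myaux_measure_Ioc (μ : Measure ℝ) [IsProbabilityMeasure μ] (s t : ℝ) :
    μ (Set.Ioc s t) = ENNReal.ofReal (cdf μ t - cdf μ s) := by
  conv_lhs => rw [← measure_cdf μ]
  exact (cdf μ).measure_Ioc s t

lemma myaux_noatom (f : ℝ → ℝ)
    (hμf : (μ : Measure ℝ) = MeasureTheory.volume.withDensity (fun x => ENNReal.ofReal (f x)))
    (p : ℝ) : μ {p} = 0 := by
  rw [hμf, withDensity_apply _ (measurableSet_singleton p),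
    Measure.restrict_eq_zero.mpr (by simp), lintegral_zero_measure]

lemma myaux_continuous_cdf (μ : Measure ℝ) [IsProbabilityMeasure μ]
    (h0 : ∀ p : ℝ, μ {p} = 0) : Continuous (cdf μ) := by
  rw [continuous_iff_continuousAt]
  intro p
  rw [(monotone_cdf μ).continuousAt_iff_leftLim_eq_rightLim, (cdf μ).rightLim_eq]
  have hm := (cdf μ).measure_singleton p
  rw [measure_cdf, h0 p, eq_comm, ENNReal.ofReal_eq_zero] at hm
  have h2 : Function.leftLim (cdf μ) p ≤ cdf μ p := (monotone_cdf μ).leftLim_le le_rfl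
  linarith

lemma myaux_upper (μ : Measure ℝ) (f : ℝ → ℝ)
    (hμf : μ = MeasureTheory.volume.withDensity (fun x => ENNReal.ofReal (f x)))
    (s t C : ℝ) (h : ∀ z ∈ Set.Ioc s t, f z ≤ C) :
    μ (Set.Ioc s t) ≤ ENNReal.ofReal C * ENNReal.ofReal (t - s) := by
  rw [hμf, withDensity_apply _ measurableSet_Ioc]
  calc ∫⁻ z in Set.Ioc s t, ENNReal.ofReal (f z) ≤ ∫⁻ _ in Set.Ioc s t, ENNReal.ofReal C := by
        refine lintegral_mono_ae ((ae_restrict_iff' measurableSet_Ioc).2 (ae_of_all _ ?_))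
        exact fun z hz => ENNReal.ofReal_le_ofReal (h z hz)
    _ = ENNReal.ofReal C * ENNReal.ofReal (t - s) := by
        rw [setLIntegral_const, Real.volume_Ioc]

lemma myaux_lower (μ : Measure ℝ) (f : ℝ → ℝ)
    (hμf : μ = MeasureTheory.volume.withDensity (fun x => ENNReal.ofReal (f x)))
    (s t C : ℝ) (h : ∀ z ∈ Set.Ioc s t, C ≤ f z) :
    ENNReal.ofReal C * ENNReal.ofReal (t - s) ≤ μ (Set.Ioc s t) := by
  rw [hμf, withDensity_apply _ measurableSet_Ioc]
  calc ENNReal.ofReal C * ENNReal.ofReal (t - s)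
      = ∫⁻ _ in Set.Ioc s t, ENNReal.ofReal C := by rw [setLIntegral_const, Real.volume_Ioc]
    _ ≤ ∫⁻ z in Set.Ioc s t, ENNReal.ofReal (f z) := by
        refine lintegral_mono_ae ((ae_restrict_iff' measurableSet_Ioc).2 (ae_of_all _ ?_))
        exact fun z hz => ENNReal.ofReal_le_ofReal (h z hz)

lemma myaux_pointwise (α : ℝ) (hα0 : 0 < α) (hα1 : α < 1)
    (μ : Measure ℝ) [IsProbabilityMeasure μ]
    (f : ℝ → ℝ) (hf0 : ∀ x, 0 ≤ f x)
    (hμf : μ = MeasureTheory.volume.withDensity (fun x => ENNReal.ofReal (f x)))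
    (hOC : Set.OrdConnected (Function.support f))
    (hφ : ∀ x ∈ Function.support f, ∀ y ∈ Function.support f, x < y →
      α * (y - x) ≤ (y - (1 - cdf μ y) / f y) - (x - (1 - cdf μ x) / f x))
    (vstar : ℝ) (hvpos : 0 < vstar)
    (hopt : ∀ v : ℝ, v * (1 - cdf μ v) ≤ vstar * (1 - cdf μ vstar))
    (x : ℝ) (hGx : 0 < 1 - cdf μ x)
    (y : ℝ) (hy1 : vstar < y) (hy2 : y ≤ x) :
    1 - cdf μ y ≤ f y * ((1 - α) * y + α * vstar) := by
  have hmono := monotone_cdf μ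
  have hGy : 0 < 1 - cdf μ y := by have := hmono hy2; linarith
  have hGv : 0 < 1 - cdf μ vstar := by have := hmono (hy1.le.trans hy2); linarith
  -- a support point above y
  have hya : cdf μ y < 1 := by linarith
  obtain ⟨t, hty⟩ : ∃ t, cdf μ y < cdf μ t :=
    ((tendsto_cdf_atTop μ).eventually_const_lt hya).exists
  obtain ⟨z₂, hz₂mem, hz₂pos⟩ : ∃ z₂ ∈ Set.Ioc y t, 0 < f z₂ := by
    by_contra h; push_neg at h
    have hub := myaux_upper μ f hμf y t 0 (fun z hz => h z hz)
    rw [myaux_measure_Ioc μ y t, ENNReal.ofReal_zero, zero_mul, nonpos_iff_eq_zero,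
      ENNReal.ofReal_eq_zero] at hub
    linarith
  have hz₂S : z₂ ∈ Function.support f := Function.mem_support.mpr hz₂pos.ne'
  -- sequences
  set δ : ℕ → ℝ := fun n => 1 / ((n : ℝ) + 2) with hδdef
  have hδpos : ∀ n, 0 < δ n := fun n => by positivity
  have hδlt1 : ∀ n, δ n < 1 := fun n => by
    rw [hδdef, div_lt_one (by positivity)]
    have : (0:ℝ) ≤ (n:ℝ) := Nat.cast_nonneg n
    linarith
  have hδ0 : Tendsto δ atTop (𝓝 0) := by
    have h1 : Tendsto (fun n : ℕ => (n : ℝ) + 2) atTop atTop :=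
      tendsto_atTop_add_const_right _ 2 tendsto_natCast_atTop_atTop
    simpa [hδdef, one_div, Pi.inv_def] using h1.inv_tendsto_atTop
  set v : ℕ → ℝ := fun n => vstar + (y - vstar) * δ n with hvdef
  have hvgt : ∀ n, vstar < v n := fun n => by
    have := hδpos n; have : 0 < (y - vstar) * δ n := by nlinarith
    simp only [hvdef]; linarith
  have hvlty : ∀ n, v n < y := fun n => by
    have h1 := hδpos n; have h2 := hδlt1 n
    have h3 : (y - vstar) * δ n < (y - vstar) * 1 := by nlinarith
    simp only [hvdef]; linarith
  have hGvn : ∀ n, 0 < 1 - cdf μ (v n) := fun n => by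
    have := hmono ((hvlty n).le.trans hy2); linarith
  -- find good support points near vstar
  have hzex : ∀ n, ∃ z, vstar < z ∧ z ≤ v n ∧
      (1 - δ n) * ((1 - cdf μ (v n)) / vstar) < f z := by
    intro n
    by_contra h; push_neg at h
    set K := (1 - cdf μ (v n)) / vstar with hK
    have hKpos : 0 < K := div_pos (hGvn n) hvpos
    have hub := myaux_upper μ f hμf vstar (v n) ((1 - δ n) * K) (fun z hz => h z hz.1 hz.2)
    rw [myaux_measure_Ioc] at hub
    have hlen : 0 < v n - vstar := sub_pos.mpr (hvgt n)
    have hmean : K * (v n - vstar) ≤ cdf μ (v n) - cdf μ vstar := by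
      rw [hK, div_mul_eq_mul_div, div_le_iff₀ hvpos]
      nlinarith [hopt (v n)]
    have h1δ : (0:ℝ) ≤ 1 - δ n := by linarith [hδlt1 n]
    rw [← ENNReal.ofReal_mul (mul_nonneg h1δ hKpos.le)] at hub
    rw [ENNReal.ofReal_le_ofReal_iff (mul_nonneg (mul_nonneg h1δ hKpos.le) hlen.le)] at hub
    nlinarith [mul_pos (mul_pos (hδpos n) hKpos) hlen]
  choose z hz1 hz2 hz3 using hzex
  have hfzpos : ∀ n, 0 < f (z n) := fun n =>
    lt_trans (mul_pos (by linarith [hδlt1 n]) (div_pos (hGvn n) hvpos)) (hz3 n)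
  have hzS : ∀ n, z n ∈ Function.support f := fun n => Function.mem_support.mpr (hfzpos n).ne'
  have hzy : ∀ n, z n < y := fun n => lt_of_le_of_lt (hz2 n) (hvlty n)
  have hyS : y ∈ Function.support f := hOC.out (hzS 0) hz₂S ⟨(hzy 0).le, hz₂mem.1.le⟩
  have hfy : 0 < f y := lt_of_le_of_ne (hf0 y) (Ne.symm (Function.mem_support.mp hyS))
  -- per-n lower bound on virtual value at y
  have hBn : ∀ n, α * (y - v n) + vstar -
      vstar * (1 - cdf μ vstar) / ((1 - δ n) * (1 - cdf μ (v n))) ≤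
      y - (1 - cdf μ y) / f y := by
    intro n
    have h1 := hφ (z n) (hzS n) y hyS (hzy n)
    have hKpos : 0 < (1 - δ n) * ((1 - cdf μ (v n)) / vstar) :=
      mul_pos (by linarith [hδlt1 n]) (div_pos (hGvn n) hvpos)
    have hGz : 1 - cdf μ (z n) ≤ 1 - cdf μ vstar := by
      have := hmono (hz1 n).le; linarith
    have hdiv : (1 - cdf μ (z n)) / f (z n) ≤
        (1 - cdf μ vstar) / ((1 - δ n) * ((1 - cdf μ (v n)) / vstar)) :=
      div_le_div₀ (by linarith) hGz hKpos (le_of_lt (hz3 n))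
    have heq : (1 - cdf μ vstar) / ((1 - δ n) * ((1 - cdf μ (v n)) / vstar)) =
        vstar * (1 - cdf μ vstar) / ((1 - δ n) * (1 - cdf μ (v n))) := by
      have h1 : (1:ℝ) - δ n ≠ 0 := by linarith [hδlt1 n]
      have h2 : (1:ℝ) - cdf μ (v n) ≠ 0 := (hGvn n).ne'
      field_simp
    rw [heq] at hdiv
    have hαyz : α * (y - v n) ≤ α * (y - z n) :=
      mul_le_mul_of_nonneg_left (by linarith [hz2 n]) hα0.le
    have hstep1 : vstar - vstar * (1 - cdf μ vstar) / ((1 - δ n) * (1 - cdf μ (v n))) ≤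
        z n - (1 - cdf μ (z n)) / f (z n) := sub_le_sub (le_of_lt (hz1 n)) hdiv
    linarith [add_le_add hαyz hstep1, h1]
  -- pass to the limit
  have hvton : Tendsto v atTop (𝓝 vstar) := by
    have h1 : Tendsto (fun n => vstar + (y - vstar) * δ n) atTop
        (𝓝 (vstar + (y - vstar) * 0)) := tendsto_const_nhds.add (hδ0.const_mul (y - vstar))
    simpa using h1
  have hcdfv : Tendsto (fun n => cdf μ (v n)) atTop (𝓝 (cdf μ vstar)) := by
    have hrc := (cdf μ).right_continuous vstar
    refine hrc.tendsto.comp ?_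
    rw [tendsto_nhdsWithin_iff]
    exact ⟨hvton, Eventually.of_forall fun n => le_of_lt (hvgt n)⟩
  have hB : Tendsto (fun n => α * (y - v n) + vstar -
      vstar * (1 - cdf μ vstar) / ((1 - δ n) * (1 - cdf μ (v n)))) atTop
      (𝓝 (α * (y - vstar))) := by
    have hlim : α * (y - vstar) + vstar -
        vstar * (1 - cdf μ vstar) / ((1 - 0) * (1 - cdf μ vstar)) = α * (y - vstar) := by
      rw [sub_zero, one_mul, mul_div_assoc, div_self hGv.ne', mul_one]
      ring
    rw [← hlim]
    refine Tendsto.sub (Tendsto.add ?_ tendsto_const_nhds) ?_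
    · exact (tendsto_const_nhds.sub hvton).const_mul α
    · refine Tendsto.div tendsto_const_nhds
        ((tendsto_const_nhds.sub hδ0).mul (tendsto_const_nhds.sub hcdfv)) ?_
      simp only [sub_zero, one_mul]
      exact hGv.ne'
  have hfinal : α * (y - vstar) ≤ y - (1 - cdf μ y) / f y :=
    le_of_tendsto hB (Eventually.of_forall hBn)
  have h2 : (1 - cdf μ y) / f y ≤ (1 - α) * y + α * vstar := by linarith
  have h3 := (div_le_iff₀ hfy).mp h2
  linarith [h3]

lemma myaux_tail (α : ℝ) (hα0 : 0 < α) (hα1 : α < 1)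
    (μ : Measure ℝ) [IsProbabilityMeasure μ]
    (f : ℝ → ℝ) (hf0 : ∀ x, 0 ≤ f x)
    (hμf : μ = MeasureTheory.volume.withDensity (fun x => ENNReal.ofReal (f x)))
    (hOC : Set.OrdConnected (Function.support f))
    (hφ : ∀ x ∈ Function.support f, ∀ y ∈ Function.support f, x < y →
      α * (y - x) ≤ (y - (1 - cdf μ y) / f y) - (x - (1 - cdf μ x) / f x))
    (vstar : ℝ) (hvpos : 0 < vstar)
    (hopt : ∀ v : ℝ, v * (1 - cdf μ v) ≤ vstar * (1 - cdf μ vstar))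
    (x : ℝ) (hx : vstar ≤ x) :
    1 - cdf μ x ≤ (vstar / ((1 - α) * x + α * vstar)) ^ (1 / (1 - α)) := by
  have h1α : 0 < 1 - α := by linarith
  set c : ℝ := 1 / (1 - α) with hcdef
  have hc1 : c * (1 - α) = 1 := by rw [hcdef]; field_simp
  have hcpos : 0 < c := by positivity
  have hc1le : 1 ≤ c := by rw [hcdef, le_div_iff₀ h1α]; linarith
  set L : ℝ → ℝ := fun t => (1 - α) * t + α * vstar with hLdef
  have hLpos : ∀ t, vstar ≤ t → 0 < L t := fun t ht => by
    simp only [hLdef]; nlinarith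
  have hLx : 0 < L x := hLpos x hx
  by_cases hGx : 0 < 1 - cdf μ x
  swap
  · push_neg at hGx
    have : (0:ℝ) < (vstar / L x) ^ c := Real.rpow_pos_of_pos (div_pos hvpos hLx) c
    linarith
  have hLv : L vstar = vstar := by simp only [hLdef]; ring
  have hLcont : Continuous L := by
    simp only [hLdef]; exact (continuous_const.mul continuous_id).add continuous_const
  have hcont : Continuous (cdf μ) := myaux_continuous_cdf μ (fun p => myaux_noatom f hμf p)
  have hkey := myaux_pointwise α hα0 hα1 μ f hf0 hμf hOC hφ vstar hvpos hopt x hGx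
  -- step inequality
  have hstep : ∀ θ z, vstar ≤ θ → θ < z → z ≤ x →
      (1 - cdf μ z) - (1 - cdf μ θ) ≤ -((z - θ) * ((1 - cdf μ z) / L z)) := by
    intro θ z hθ hθz hzx
    have hLz := hLpos z (hθ.trans hθz.le)
    have hC : ∀ ζ ∈ Set.Ioc θ z, (1 - cdf μ z) / L z ≤ f ζ := by
      intro ζ hζ
      have hζv : vstar < ζ := lt_of_le_of_lt hθ hζ.1
      have hζx : ζ ≤ x := hζ.2.trans hzx
      have hLζ := hLpos ζ hζv.le
      have h1 := hkey ζ hζv hζx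
      have hGζ : 1 - cdf μ z ≤ 1 - cdf μ ζ := by have := monotone_cdf μ hζ.2; linarith
      have hLm : L ζ ≤ L z := by simp only [hLdef]; nlinarith [hζ.2]
      calc (1 - cdf μ z) / L z ≤ (1 - cdf μ ζ) / L ζ :=
            div_le_div₀ (by linarith [monotone_cdf μ (hζx), cdf_le_one μ ζ]) hGζ hLζ hLm
        _ ≤ f ζ := (div_le_iff₀ hLζ).mpr h1
    have hl := myaux_lower μ f hμf θ z ((1 - cdf μ z) / L z) hC
    rw [myaux_measure_Ioc] at hl
    have hCnn : 0 ≤ (1 - cdf μ z) / L z :=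
      div_nonneg (by linarith [cdf_le_one μ z]) hLz.le
    rw [← ENNReal.ofReal_mul hCnn,
      ENNReal.ofReal_le_ofReal_iff (by linarith [monotone_cdf μ hθz.le])] at hl
    linarith [hl]
  -- Gronwall via Dini derivative
  set Φ : ℝ → ℝ := fun t => (1 - cdf μ t) * (L t) ^ c with hΦdef
  have hΦcont : ContinuousOn Φ (Set.Icc vstar x) :=
    ((continuous_const.sub hcont).mul
      (hLcont.rpow_const fun t => Or.inr hcpos.le)).continuousOn
  have hmain : ∀ ⦃t⦄, t ∈ Set.Icc vstar x → Φ t ≤ Φ vstar := by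
    refine image_le_of_liminf_slope_right_le_deriv_boundary (B := fun _ => Φ vstar)
      (B' := fun _ => 0) hΦcont le_rfl continuousOn_const
      (fun θ _ => hasDerivWithinAt_const θ _ _) ?_
    intro θ hθ r hr
    have hLθ := hLpos θ hθ.1
    -- the upper bound function for the slope tends to 0
    have hT1 : Tendsto (fun z => (1 - cdf μ z) * L z ^ (c - 1)) (𝓝[>] θ)
        (𝓝 ((1 - cdf μ θ) * L θ ^ (c - 1))) :=
      (((continuous_const.sub hcont).mul
        (hLcont.rpow_const fun t => Or.inr (by linarith))).continuousAt).tendsto.mono_left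
        nhdsWithin_le_nhds
    have hdL : HasDerivAt L (1 - α) θ := by
      simp only [hLdef]
      simpa using ((hasDerivAt_id θ).const_mul (1 - α)).add_const (α * vstar)
    have hd : HasDerivAt (fun t => L t ^ c) (c * L θ ^ (c - 1) * (1 - α)) θ :=
      HasDerivAt.comp θ (Real.hasDerivAt_rpow_const (Or.inl hLθ.ne')) hdL
    have hT2 : Tendsto (slope (fun t => L t ^ c) θ) (𝓝[>] θ)
        (𝓝 (c * L θ ^ (c - 1) * (1 - α))) :=
      (hasDerivAt_iff_tendsto_slope.mp hd).mono_left
        (nhdsWithin_mono θ fun z hz => ne_of_gt hz)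
    have hT : Tendsto (fun z => -((1 - cdf μ z) * L z ^ (c - 1)) +
        (1 - cdf μ θ) * slope (fun t => L t ^ c) θ z) (𝓝[>] θ) (𝓝 0) := by
      have h0 : -((1 - cdf μ θ) * L θ ^ (c - 1)) +
          (1 - cdf μ θ) * (c * L θ ^ (c - 1) * (1 - α)) = 0 := by
        linear_combination ((1 - cdf μ θ) * L θ ^ (c - 1)) * hc1
      rw [← h0]
      exact hT1.neg.add (hT2.const_mul _)
    have hev1 := hT.eventually_lt_const hr
    have hev2 : ∀ᶠ z in 𝓝[>] θ, z ∈ Set.Ioo θ x :=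
      Ioo_mem_nhdsGT_of_mem ⟨le_refl θ, hθ.2⟩
    refine ((hev1.and hev2).mono ?_).frequently
    rintro z ⟨h1, h2⟩
    have hθz : θ < z := h2.1
    have hzx : z ≤ x := h2.2.le
    have hLz := hLpos z (hθ.1.trans hθz.le)
    have hs := hstep θ z hθ.1 hθz hzx
    have h4 := mul_le_mul_of_nonneg_right hs (Real.rpow_nonneg hLz.le c)
    have e3 : (1 - cdf μ z) / L z * L z ^ c = (1 - cdf μ z) * L z ^ (c - 1) := by
      rw [div_mul_eq_mul_div, mul_div_assoc, ← Real.rpow_sub_one hLz.ne']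
    have hnum : Φ z - Φ θ ≤ (z - θ) * (-((1 - cdf μ z) * L z ^ (c - 1)) +
        (1 - cdf μ θ) * slope (fun t => L t ^ c) θ z) := by
      have e1 : Φ z - Φ θ = ((1 - cdf μ z) - (1 - cdf μ θ)) * L z ^ c +
          (1 - cdf μ θ) * (L z ^ c - L θ ^ c) := by simp only [hΦdef]; ring
      have e2 : slope (fun t => L t ^ c) θ z = (L z ^ c - L θ ^ c) / (z - θ) :=
        slope_def_field _ _ _
      rw [e1, e2]
      have h5 : -((z - θ) * ((1 - cdf μ z) / L z)) * L z ^ c =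
          -((z - θ) * ((1 - cdf μ z) * L z ^ (c - 1))) := by
        rw [← e3]; ring
      rw [h5] at h4
      have hzθ : z - θ ≠ 0 := (sub_pos.mpr hθz).ne'
      calc ((1 - cdf μ z) - (1 - cdf μ θ)) * L z ^ c + (1 - cdf μ θ) * (L z ^ c - L θ ^ c)
          ≤ -((z - θ) * ((1 - cdf μ z) * L z ^ (c - 1))) +
            (1 - cdf μ θ) * (L z ^ c - L θ ^ c) := by linarith
        _ = (z - θ) * (-((1 - cdf μ z) * L z ^ (c - 1)) +
            (1 - cdf μ θ) * ((L z ^ c - L θ ^ c) / (z - θ))) := by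
          field_simp
    have hslope : slope Φ θ z ≤ -((1 - cdf μ z) * L z ^ (c - 1)) +
        (1 - cdf μ θ) * slope (fun t => L t ^ c) θ z := by
      rw [slope_def_field, div_le_iff₀ (sub_pos.mpr hθz)]
      calc Φ z - Φ θ ≤ _ := hnum
        _ = _ := by ring
    exact lt_of_le_of_lt hslope h1
  have hx1 := hmain (Set.right_mem_Icc.mpr hx)
  have hΦv : Φ vstar ≤ vstar ^ c := by
    simp only [hΦdef, hLv]
    exact mul_le_of_le_one_left (Real.rpow_nonneg hvpos.le c)
      (by linarith [cdf_nonneg μ vstar])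
  have hgoal : (1 - cdf μ x) * L x ^ c ≤ vstar ^ c := le_trans hx1 hΦv
  rw [Real.div_rpow hvpos.le hLx.le, le_div_iff₀ (Real.rpow_pos_of_pos hLx c)]
  exact hgoal

end AuxTailBound

open MeasureTheory ProbabilityTheory in
/-- tail bound for `α`-strongly regular distributions. For
`0 < α < 1` and an `α`-strongly regular distribution with monopoly price
`v* = argmax_v v·(1 − F v)`: for every `x ≥ v*`,
`1 − F(x) ≤ (v*/((1−α)x + α·v*))^{1/(1−α)}`; consequently the maximum `X` of `N`
i.i.d. samples satisfies `Pr[X > x] ≤ N·(v*/((1−α)x + α·v*))^{1/(1−α)}`. -/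
theorem alphaStronglyRegular_tail_bound (α : ℝ) (hα0 : 0 < α) (hα1 : α < 1)
    (μ : Measure ℝ) (hμ : IsProbabilityMeasure μ) (hreg : IsAlphaStronglyRegular α μ)
    (vstar : ℝ) (hvpos : 0 < vstar)
    (hopt : ∀ v : ℝ, v * (1 - cdf μ v) ≤ vstar * (1 - cdf μ vstar))
    (x : ℝ) (hx : vstar ≤ x) (N : ℕ) :
    1 - cdf μ x ≤ (vstar / ((1 - α) * x + α * vstar)) ^ (1 / (1 - α)) ∧
    (Measure.pi fun _ : Fin N => μ) {w | ∃ i, x < w i} ≤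
      ENNReal.ofReal ((N : ℝ) * (vstar / ((1 - α) * x + α * vstar)) ^ (1 / (1 - α))) := by
  classical
  haveI := hμ
  obtain ⟨f, hf0, hμf, hOC, hSnn, hφ⟩ := hreg
  have part1 := myaux_tail α hα0 hα1 μ f hf0 hμf hOC hφ vstar hvpos hopt x hx
  refine ⟨part1, ?_⟩
  have hset : {w : Fin N → ℝ | ∃ i, x < w i} = ⋃ i, Function.eval i ⁻¹' Set.Ioi x := by
    ext w; simp [Set.mem_iUnion, Set.mem_Ioi]
  have hone : ∀ i : Fin N,
      (Measure.pi fun _ : Fin N => μ) (Function.eval i ⁻¹' Set.Ioi x) = μ (Set.Ioi x) := by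
    intro i
    rw [Set.eval_preimage, Measure.pi_pi,
      Fintype.prod_eq_single i (fun j hj => by rw [Function.update_of_ne hj]; exact measure_univ),
      Function.update_self]
  have hIoi : μ (Set.Ioi x) = ENNReal.ofReal (1 - cdf μ x) := by
    have h1 : Set.Ioi x = (Set.Iic x)ᶜ := Set.compl_Iic.symm
    rw [h1, prob_compl_eq_one_sub measurableSet_Iic, ← ofReal_cdf μ x,
      ENNReal.ofReal_sub _ (cdf_nonneg μ x), ENNReal.ofReal_one]
  calc (Measure.pi fun _ : Fin N => μ) {w | ∃ i, x < w i}
      ≤ tsum (fun i : Fin N => (Measure.pi fun _ : Fin N => μ) (Function.eval i ⁻¹' Set.Ioi x)) := by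
        rw [hset]; exact measure_iUnion_le _
    _ = (N : ENNReal) * ENNReal.ofReal (1 - cdf μ x) := by
        rw [tsum_congr (fun i => (hone i).trans hIoi), tsum_fintype]
        simp [Finset.sum_const, Finset.card_univ]
    _ ≤ ENNReal.ofReal ((N : ℝ) * (vstar / ((1 - α) * x + α * vstar)) ^ (1 / (1 - α))) := by
        rw [← ENNReal.ofReal_natCast N, ← ENNReal.ofReal_mul (Nat.cast_nonneg N)]
        exact ENNReal.ofReal_le_ofReal
          (mul_le_mul_of_nonneg_left part1 (Nat.cast_nonneg N))
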